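/- Let a ∈ ℂ with a ∉ {(π/2)(m + n·i) : m, n ∈ ℤ}. Let Φ : ℝ² → M₂(ℂ) be a continuously differentiable doubly periodic function satisfying, at every point, ∂ₓΦ + (a − conj(a))(σΦ − Φσ) = 0 and ∂_yΦ − i(a + conj(a))(σΦ − Φσ) = 0. Then Φ is a constant diagonal matrix: its off-diagonal entries vanish identically and its diagonal entries are constant. -/

import Mathlib

open Matrix

/-- Entrywise partial derivative in the `x` direction of a matrix-valued function on `ℝ²`. -/
noncomputable def pX (f : ℝ × ℝ → Matrix (Fin 2) (Fin 2) ℂ) :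
    ℝ × ℝ → Matrix (Fin 2) (Fin 2) ℂ :=
  fun p => Matrix.of fun i j => fderiv ℝ (fun q => f q i j) p (1, 0)

/-- Entrywise partial derivative in the `y` direction of a matrix-valued function on `ℝ²`. -/
noncomputable def pY (f : ℝ × ℝ → Matrix (Fin 2) (Fin 2) ℂ) :
    ℝ × ℝ → Matrix (Fin 2) (Fin 2) ℂ :=
  fun p => Matrix.of fun i j => fderiv ℝ (fun q => f q i j) p (0, 1)

/-- A function on `ℝ²` is doubly periodic (a function on the square torus) if it has
period 1 in both variables. -/
def DoublyPeriodic (f : ℝ × ℝ → Matrix (Fin 2) (Fin 2) ℂ) : Prop :=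
  ∀ x y : ℝ, f (x + 1, y) = f (x, y) ∧ f (x, y + 1) = f (x, y)

lemma solve_const (α β : ℂ) (f : ℝ × ℝ → ℂ) (hf : ContDiff ℝ 1 f)
    (hx : ∀ p, fderiv ℝ f p (1, 0) = -α * f p)
    (hy : ∀ p, fderiv ℝ f p (0, 1) = -β * f p) :
    ∀ p : ℝ × ℝ, f p * Complex.exp (α * p.1 + β * p.2) = f 0 := by
  set L : (ℝ × ℝ) →L[ℝ] ℂ :=
    (ContinuousLinearMap.fst ℝ ℝ ℝ).smulRight α + (ContinuousLinearMap.snd ℝ ℝ ℝ).smulRight β with hLdef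
  have hL : ∀ p : ℝ × ℝ, L p = α * p.1 + β * p.2 := by
    intro p
    simp [hLdef, Complex.real_smul]
    ring
  have hdiff : ∀ p, HasFDerivAt f (fderiv ℝ f p) p := fun p =>
    ((hf.differentiable one_ne_zero) p).hasFDerivAt
  have hexp : ∀ p : ℝ × ℝ, HasFDerivAt (fun q => Complex.exp (L q))
      (Complex.exp (L p) • (L : (ℝ×ℝ) →L[ℝ] ℂ)) p := fun p =>
    (Complex.hasDerivAt_exp (L p)).comp_hasFDerivAt p (L.hasFDerivAt)
  have hg0 : ∀ p, HasFDerivAt (fun q => f q * Complex.exp (L q)) (0 : (ℝ × ℝ) →L[ℝ] ℂ) p := by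
    intro p
    have h := (hdiff p).mul (hexp p)
    have hz : (f p • (Complex.exp (L p) • (L : (ℝ×ℝ) →L[ℝ] ℂ)) +
        Complex.exp (L p) • fderiv ℝ f p) = 0 := by
      refine ContinuousLinearMap.ext fun v => ?_
      have hv : (v : ℝ × ℝ) = v.1 • ((1:ℝ),(0:ℝ)) + v.2 • ((0:ℝ),(1:ℝ)) := by
        simp [Prod.ext_iff]
      have hFv : (fderiv ℝ f p) v = (v.1 : ℂ) * (-α * f p) + (v.2 : ℂ) * (-β * f p) := by
        conv_lhs => rw [hv]
        rw [map_add, _root_.map_smul, _root_.map_smul, hx p, hy p, Complex.real_smul, Complex.real_smul]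
      simp only [ContinuousLinearMap.add_apply, ContinuousLinearMap.coe_smul',
        Pi.smul_apply, ContinuousLinearMap.zero_apply, hFv, hL, smul_eq_mul]
      ring
    rw [hz] at h
    exact h
  intro p
  have hc := is_const_of_fderiv_eq_zero (fun q => (hg0 q).differentiableAt)
    (fun q => (hg0 q).fderiv) p 0
  rw [hL p] at hc
  simpa using hc

lemma off_zero (α β : ℂ) (f : ℝ × ℝ → ℂ)
    (hsol : ∀ p : ℝ × ℝ, f p * Complex.exp (α * p.1 + β * p.2) = f 0)
    (hp1 : f (1, 0) = f (0, 0)) (hp2 : f (0, 1) = f (0, 0))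
    (hne : ¬(Complex.exp α = 1 ∧ Complex.exp β = 1)) : ∀ p, f p = 0 := by
  have h00 : f (0, 0) = f 0 := rfl
  have hf0 : f 0 = 0 := by
    by_contra h
    apply hne
    constructor
    · have h1 := hsol (1, 0)
      simp only at h1
      norm_num at h1
      rw [hp1, h00] at h1
      exact mul_left_cancel₀ h (by rw [mul_one]; exact h1)
    · have h1 := hsol (0, 1)
      simp only at h1
      norm_num at h1
      rw [hp2, h00] at h1
      exact mul_left_cancel₀ h (by rw [mul_one]; exact h1)
  intro p
  have hp := hsol p
  rw [hf0] at hp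
  exact (mul_eq_zero.mp hp).resolve_right (Complex.exp_ne_zero _)

lemma half_period (a : ℂ) (n m : ℤ)
    (e1 : 2 * (a - (starRingEnd ℂ) a) = n * (2 * Real.pi * Complex.I))
    (e2 : -(Complex.I * (a + (starRingEnd ℂ) a)) * 2 = m * (2 * Real.pi * Complex.I)) :
    ∃ m' n' : ℤ, a = ((Real.pi : ℂ) / 2) * ((m' : ℂ) + (n' : ℂ) * Complex.I) := by
  refine ⟨-m, n, ?_⟩
  push_cast
  linear_combination e1 / 4 + Complex.I / 4 * e2 +
    ((a + (starRingEnd ℂ) a) / 2 + (Real.pi : ℂ) * m / 2) * Complex.I_sq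

/-- Kernel of the covariant derivative `d_A` for the flat connection
`A = diag(a, -a)dz̄ - diag(ā, -ā)dz` on the trivial rank-2 bundle over `T²`, for `a`
not a half-period point: a doubly periodic `C¹` solution `Φ` of `d_A Φ = 0` is a
constant diagonal matrix. -/
theorem const_diagonal_of_covariant_closed (a : ℂ)
    (ha : ¬ ∃ m n : ℤ, a = ((Real.pi : ℂ) / 2) * ((m : ℂ) + (n : ℂ) * Complex.I))
    (Φ : ℝ × ℝ → Matrix (Fin 2) (Fin 2) ℂ)
    (hC1 : ∀ i j, ContDiff ℝ 1 fun q => Φ q i j)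
    (hper : DoublyPeriodic Φ)
    (σ : Matrix (Fin 2) (Fin 2) ℂ) (hσ : σ = !![1, 0; 0, -1])
    (heqx : ∀ p, pX Φ p + (a - (starRingEnd ℂ) a) • (σ * Φ p - Φ p * σ) = 0)
    (heqy : ∀ p, pY Φ p - (Complex.I * (a + (starRingEnd ℂ) a)) • (σ * Φ p - Φ p * σ) = 0) :
    ∃ d₁ d₂ : ℂ, ∀ p, Φ p = !![d₁, 0; 0, d₂] := by
  set c := starRingEnd ℂ a with hc
  -- periodicity for entries
  have hper1 : ∀ i j : Fin 2, Φ ((1:ℝ), (0:ℝ)) i j = Φ ((0:ℝ), (0:ℝ)) i j := by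
    intro i j
    have h := (hper 0 0).1
    norm_num at h
    rw [h]
  have hper2 : ∀ i j : Fin 2, Φ ((0:ℝ), (1:ℝ)) i j = Φ ((0:ℝ), (0:ℝ)) i j := by
    intro i j
    have h := (hper 0 0).2
    norm_num at h
    rw [h]
  -- entrywise derivative equations
  have hx00 : ∀ p, fderiv ℝ (fun q => Φ q 0 0) p (1, 0) = -(0:ℂ) * Φ p 0 0 := by
    intro p
    have h := congrFun (congrFun (heqx p) 0) 0
    simp [pX, hσ, Matrix.mul_apply, Matrix.vecMul, dotProduct, Matrix.vecHead,
      Matrix.vecTail, Fin.sum_univ_two] at h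
    linear_combination h
  have hy00 : ∀ p, fderiv ℝ (fun q => Φ q 0 0) p (0, 1) = -(0:ℂ) * Φ p 0 0 := by
    intro p
    have h := congrFun (congrFun (heqy p) 0) 0
    simp [pY, hσ, Matrix.mul_apply, Matrix.vecMul, dotProduct, Matrix.vecHead,
      Matrix.vecTail, Fin.sum_univ_two] at h
    linear_combination h
  have hx11 : ∀ p, fderiv ℝ (fun q => Φ q 1 1) p (1, 0) = -(0:ℂ) * Φ p 1 1 := by
    intro p
    have h := congrFun (congrFun (heqx p) 1) 1
    simp [pX, hσ, Matrix.mul_apply, Matrix.vecMul, dotProduct, Matrix.vecHead,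
      Matrix.vecTail, Fin.sum_univ_two] at h
    linear_combination h
  have hy11 : ∀ p, fderiv ℝ (fun q => Φ q 1 1) p (0, 1) = -(0:ℂ) * Φ p 1 1 := by
    intro p
    have h := congrFun (congrFun (heqy p) 1) 1
    simp [pY, hσ, Matrix.mul_apply, Matrix.vecMul, dotProduct, Matrix.vecHead,
      Matrix.vecTail, Fin.sum_univ_two] at h
    linear_combination h
  have hx01 : ∀ p, fderiv ℝ (fun q => Φ q 0 1) p (1, 0) = -(2 * (a - c)) * Φ p 0 1 := by
    intro p
    have h := congrFun (congrFun (heqx p) 0) 1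
    simp [pX, hσ, Matrix.mul_apply, Matrix.vecMul, dotProduct, Matrix.vecHead,
      Matrix.vecTail, Fin.sum_univ_two] at h
    linear_combination h
  have hy01 : ∀ p, fderiv ℝ (fun q => Φ q 0 1) p (0, 1) = -(-(Complex.I * (a + c)) * 2) * Φ p 0 1 := by
    intro p
    have h := congrFun (congrFun (heqy p) 0) 1
    simp [pY, hσ, Matrix.mul_apply, Matrix.vecMul, dotProduct, Matrix.vecHead,
      Matrix.vecTail, Fin.sum_univ_two] at h
    linear_combination h
  have hx10 : ∀ p, fderiv ℝ (fun q => Φ q 1 0) p (1, 0) = -(-(2 * (a - c))) * Φ p 1 0 := by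
    intro p
    have h := congrFun (congrFun (heqx p) 1) 0
    simp [pX, hσ, Matrix.mul_apply, Matrix.vecMul, dotProduct, Matrix.vecHead,
      Matrix.vecTail, Fin.sum_univ_two] at h
    linear_combination h
  have hy10 : ∀ p, fderiv ℝ (fun q => Φ q 1 0) p (0, 1) = -(Complex.I * (a + c) * 2) * Φ p 1 0 := by
    intro p
    have h := congrFun (congrFun (heqy p) 1) 0
    simp [pY, hσ, Matrix.mul_apply, Matrix.vecMul, dotProduct, Matrix.vecHead,
      Matrix.vecTail, Fin.sum_univ_two] at h
    linear_combination h
  -- diagonal entries are constant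
  have c00 : ∀ p, Φ p 0 0 = Φ 0 0 0 := by
    intro p
    have := solve_const 0 0 (fun q => Φ q 0 0) (hC1 0 0) hx00 hy00 p
    simpa using this
  have c11 : ∀ p, Φ p 1 1 = Φ 0 1 1 := by
    intro p
    have := solve_const 0 0 (fun q => Φ q 1 1) (hC1 1 1) hx11 hy11 p
    simpa using this
  -- off-diagonal entries vanish
  have z01 : ∀ p, Φ p 0 1 = 0 := by
    refine off_zero (2 * (a - c)) (-(Complex.I * (a + c)) * 2) (fun q => Φ q 0 1)
      (solve_const _ _ _ (hC1 0 1) hx01 hy01) (hper1 0 1) (hper2 0 1) ?_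
    rintro ⟨h1, h2⟩
    rw [Complex.exp_eq_one_iff] at h1 h2
    obtain ⟨n, h1⟩ := h1
    obtain ⟨m, h2⟩ := h2
    exact ha (half_period a n m h1 h2)
  have z10 : ∀ p, Φ p 1 0 = 0 := by
    refine off_zero (-(2 * (a - c))) (Complex.I * (a + c) * 2) (fun q => Φ q 1 0)
      (solve_const _ _ _ (hC1 1 0) hx10 hy10) (hper1 1 0) (hper2 1 0) ?_
    rintro ⟨h1, h2⟩
    rw [Complex.exp_eq_one_iff] at h1 h2
    obtain ⟨n, h1⟩ := h1
    obtain ⟨m, h2⟩ := h2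
    refine ha (half_period a (-n) (-m) ?_ ?_)
    · push_cast
      linear_combination -h1
    · push_cast
      linear_combination -h2
  refine ⟨Φ 0 0 0, Φ 0 1 1, fun p => ?_⟩
  ext i j
  fin_cases i <;> fin_cases j <;>
    simp [c00 p, c11 p, z01 p, z10 p]
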